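/- The map τ ↦ div τ is a bijection from the space sym(ℍ_k(ℝ^d; ℝ^d)·x^T) of symmetric parts of tensor products q(x)x^T with q homogeneous of degree k, onto ℍ_k(ℝ^d; ℝ^d). Consequently div : ℙ_{k+1}(ℝ^d; 𝕊) → ℙ_k(ℝ^d; ℝ^d) is surjective. -/

import Mathlib

open MvPolynomial Finset

/-- The symmetric part of the tensor product `q(x) xᵀ`, as a matrix-valued polynomial field. -/
noncomputable def symQX (d : ℕ) (q : Fin d → MvPolynomial (Fin d) ℝ) :
    Fin d → Fin d → MvPolynomial (Fin d) ℝ :=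
  fun i j => C (2⁻¹ : ℝ) * (q i * X j + X i * q j)

/-- The row-wise divergence of a matrix-valued polynomial field. -/
noncomputable def matDiv (d : ℕ) (τ : Fin d → Fin d → MvPolynomial (Fin d) ℝ) :
    Fin d → MvPolynomial (Fin d) ℝ :=
  fun i => ∑ j : Fin d, pderiv j (τ i j)

lemma deg_add {d : ℕ} (a b : Fin d →₀ ℕ) : (a + b).degree = a.degree + b.degree := by
  simp [Finsupp.degree_eq_weight_one, map_add]

lemma deg_single {d : ℕ} (i : Fin d) (n : ℕ) : (Finsupp.single i n).degree = n := by
  classical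
  rcases eq_or_ne n 0 with h | h
  · simp [h]
  · simp [Finsupp.degree_apply, Finsupp.support_single_ne_zero _ h]

lemma Xmul_pderiv_monomial {d : ℕ} (v : Fin d →₀ ℕ) (c : ℝ) (i j : Fin d) :
    X i * pderiv j (monomial v c) =
      monomial (Finsupp.single i 1 + (v - Finsupp.single j 1)) (c * v j) := by
  rw [pderiv_monomial, X, monomial_mul, one_mul]

lemma hom_deg {d n : ℕ} {p : MvPolynomial (Fin d) ℝ} (hp : p.IsHomogeneous n)
    {v : Fin d →₀ ℕ} (hv : v ∈ p.support) : v.degree = n := by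
  rw [Finsupp.degree_eq_weight_one]
  exact hp (mem_support_iff.mp hv)

lemma hom_X_mul_pderiv {d n : ℕ} {p : MvPolynomial (Fin d) ℝ} (hp : p.IsHomogeneous n)
    (i j : Fin d) : (X i * pderiv j p).IsHomogeneous n := by
  classical
  conv_lhs => rw [p.as_sum]
  rw [map_sum, Finset.mul_sum]
  apply IsHomogeneous.sum
  intro v hv
  rw [Xmul_pderiv_monomial]
  rcases Nat.eq_zero_or_pos (v j) with h0 | h1
  · simp [h0, isHomogeneous_zero]
  · have hdeg : v.degree = n := hom_deg hp hv
    have hle : Finsupp.single j 1 ≤ v := by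
      rw [Finsupp.single_le_iff]; exact h1
    have hsub : (v - Finsupp.single j 1) + Finsupp.single j 1 = v := tsub_add_cancel_of_le hle
    have hdeg2 : (v - Finsupp.single j 1).degree + 1 = n := by
      have := congrArg Finsupp.degree hsub
      rw [deg_add, deg_single] at this
      omega
    apply isHomogeneous_monomial
    rw [deg_add, deg_single]
    omega

lemma hom_pderiv {d n : ℕ} {p : MvPolynomial (Fin d) ℝ} (hp : p.IsHomogeneous n)
    (j : Fin d) : (pderiv j p).IsHomogeneous (n - 1) := by
  classical
  conv_lhs => rw [p.as_sum]
  rw [map_sum]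
  apply IsHomogeneous.sum
  intro v hv
  rw [pderiv_monomial]
  rcases Nat.eq_zero_or_pos (v j) with h0 | h1
  · simp [h0, isHomogeneous_zero]
  · have hdeg : v.degree = n := hom_deg hp hv
    have hle : Finsupp.single j 1 ≤ v := by
      rw [Finsupp.single_le_iff]; exact h1
    have hsub : (v - Finsupp.single j 1) + Finsupp.single j 1 = v := tsub_add_cancel_of_le hle
    have hdeg2 : (v - Finsupp.single j 1).degree + 1 = n := by
      have := congrArg Finsupp.degree hsub
      rw [deg_add, deg_single] at this
      omega
    apply isHomogeneous_monomial
    omega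

lemma pderiv_hom_zero {d : ℕ} {p : MvPolynomial (Fin d) ℝ} (hp : p.IsHomogeneous 0)
    (j : Fin d) : pderiv j p = 0 := by
  classical
  conv_lhs => rw [p.as_sum]
  rw [map_sum]
  apply Finset.sum_eq_zero
  intro v hv
  have hdeg : v.degree = 0 := hom_deg hp hv
  have hv0 : v = 0 := (Finsupp.degree_eq_zero_iff v).mp hdeg
  rw [pderiv_monomial, hv0]
  simp

lemma euler {d n : ℕ} {p : MvPolynomial (Fin d) ℝ} (hp : p.IsHomogeneous n) :
    ∑ i : Fin d, X i * pderiv i p = (n : MvPolynomial (Fin d) ℝ) * p := by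
  classical
  conv_lhs => rw [p.as_sum]
  conv_rhs => rw [p.as_sum]
  simp only [map_sum, Finset.mul_sum]
  rw [Finset.sum_comm]
  apply Finset.sum_congr rfl
  intro v hv
  have hdeg : v.degree = n := hom_deg hp hv
  calc ∑ i : Fin d, X i * pderiv i (monomial v (coeff v p))
      = ∑ i : Fin d, monomial v (coeff v p * v i) := by
        apply Finset.sum_congr rfl
        intro i _
        rw [Xmul_pderiv_monomial]
        rcases Nat.eq_zero_or_pos (v i) with h0 | h1
        · simp [h0]
        · have hle : Finsupp.single i 1 ≤ v := by rw [Finsupp.single_le_iff]; exact h1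
          congr 1
          rw [add_comm, tsub_add_cancel_of_le hle]
    _ = monomial v (coeff v p * ∑ i : Fin d, (v i : ℝ)) := by
        rw [Finset.mul_sum, map_sum]
    _ = (n : MvPolynomial (Fin d) ℝ) * monomial v (coeff v p) := by
        have hsum : ∑ i : Fin d, (v i : ℝ) = (n : ℝ) := by
          rw [← hdeg, Finsupp.degree, ← Nat.cast_sum]
          congr 1
          exact (Finset.sum_subset (Finset.subset_univ _)
            (by intro x _ hx; simpa using hx)).symm
        rw [hsum, show ((n : MvPolynomial (Fin d) ℝ)) = C (n : ℝ) by simp,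
          C_mul_monomial, mul_comm]

lemma matDiv_symQX {d k : ℕ} (q : Fin d → MvPolynomial (Fin d) ℝ)
    (hq : ∀ i, (q i).IsHomogeneous k) (i : Fin d) :
    matDiv d (symQX d q) i =
      C (2⁻¹ : ℝ) * (((k + d + 1 : ℕ) : MvPolynomial (Fin d) ℝ) * q i
        + X i * ∑ j, pderiv j (q j)) := by
  classical
  have hE : ∑ j : Fin d, X j * pderiv j (q i) = (k : MvPolynomial (Fin d) ℝ) * q i :=
    euler (hq i)
  simp only [matDiv, symQX, map_add, pderiv_mul, pderiv_C, pderiv_X, zero_mul, zero_add]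
  rw [← Finset.mul_sum]
  congr 1
  have h1 : ∀ j : Fin d, pderiv j (q i) * X j + q i * Pi.single (M := fun _ => MvPolynomial (Fin d) ℝ) j 1 j
      + (Pi.single (M := fun _ => MvPolynomial (Fin d) ℝ) j 1 i * q j + X i * pderiv j (q j))
      = X j * pderiv j (q i) + q i + ((if j = i then q j else 0) + X i * pderiv j (q j)) := by
    intro j
    rcases eq_or_ne j i with h | h <;> simp [h, Pi.single_apply, mul_comm]
  rw [Finset.sum_congr rfl fun j _ => h1 j]
  simp only [Finset.sum_add_distrib, hE, Finset.sum_const, Finset.card_univ, Fintype.card_fin,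
    Finset.sum_ite_eq', Finset.mem_univ, if_true]
  rw [Finset.mul_sum]
  push_cast
  ring

lemma natCast_poly {d : ℕ} (n : ℕ) :
    ((n : MvPolynomial (Fin d) ℝ)) = C (n : ℝ) := by simp
lemma exists_q {d k : ℕ} (hd : 1 ≤ d) (v : Fin d → MvPolynomial (Fin d) ℝ)
    (hv : ∀ i, (v i).IsHomogeneous k) :
    ∃ q : Fin d → MvPolynomial (Fin d) ℝ, (∀ i, (q i).IsHomogeneous k) ∧
      matDiv d (symQX d q) = v := by
  classical
  set D : MvPolynomial (Fin d) ℝ := ∑ j, pderiv j (v j) with hD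
  set α : ℝ := 2 / ((k : ℝ) + d + 1) with hα
  set β : ℝ := -(1 / ((((k : ℝ) + d)) * ((k : ℝ) + d + 1))) with hβ
  set q : Fin d → MvPolynomial (Fin d) ℝ := fun i => C α * v i + C β * (X i * D) with hqdef
  have hXD : ∀ i : Fin d, (X i * D).IsHomogeneous k := by
    intro i
    rw [hD, Finset.mul_sum]
    exact IsHomogeneous.sum _ _ _ fun j _ => hom_X_mul_pderiv (hv j) i j
  have hq : ∀ i, (q i).IsHomogeneous k := fun i =>
    ((hv i).C_mul α).add ((hXD i).C_mul β)
  refine ⟨q, hq, ?_⟩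
  have hDhom : D.IsHomogeneous (k - 1) :=
    IsHomogeneous.sum _ _ _ fun j _ => hom_pderiv (hv j) j
  have hE : ∑ j : Fin d, X j * pderiv j D
      = (((k - 1 : ℕ)) : MvPolynomial (Fin d) ℝ) * D := euler hDhom
  have hDq : ∑ j, pderiv j (q j)
      = C α * D + C β * ((C ((d:ℕ):ℝ) + C (((k - 1 : ℕ)):ℝ)) * D) := by
    have step : ∀ j : Fin d, pderiv j (q j)
        = C α * pderiv j (v j) + C β * (D + X j * pderiv j D) := by
      intro j
      simp only [hqdef, map_add, pderiv_C_mul, pderiv_mul, pderiv_C, pderiv_X_self, one_mul, mul_one, zero_mul, add_zero, zero_add]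
    rw [Finset.sum_congr rfl fun j _ => step j, Finset.sum_add_distrib,
      ← Finset.mul_sum, ← hD, ← Finset.mul_sum, Finset.sum_add_distrib,
      Finset.sum_const, Finset.card_univ, Fintype.card_fin, hE, nsmul_eq_mul]
    rw [natCast_poly, natCast_poly]
    ring
  funext i
  rw [matDiv_symQX q hq i, hDq]
  rcases Nat.eq_zero_or_pos k with hk0 | hk1
  · have hD0 : D = 0 := by
      rw [hD]
      exact Finset.sum_eq_zero fun j _ => pderiv_hom_zero (hk0 ▸ hv j) j
    subst hk0
    simp only [hqdef, hD0, mul_zero, add_zero, zero_add, natCast_poly]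
    rw [← mul_assoc, ← C_mul, ← mul_assoc, ← C_mul]
    have hc : (2⁻¹:ℝ) * ((d + 1 : ℕ):ℝ) * α = 1 := by
      rw [hα]; push_cast; field_simp; ring
    rw [hc, C_1, one_mul]
  · -- k ≥ 1
    have hkd : ((k : ℝ) + d) ≠ 0 := by positivity
    have hkd1 : ((k : ℝ) + d + 1) ≠ 0 := by positivity
    have hc1 : (2⁻¹ : ℝ) * (((k + d + 1 : ℕ) : ℝ) * α) = 1 := by
      rw [hα]; push_cast; field_simp
    have hc2 : (2⁻¹ : ℝ) * (((k + d + 1 : ℕ) : ℝ) * β + (α + β * (((d:ℕ):ℝ) + ((k-1:ℕ):ℝ)))) = 0 := by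
      rw [hα, hβ]
      have hcst : ((k - 1 : ℕ) : ℝ) = (k : ℝ) - 1 := by
        rw [Nat.cast_sub hk1]; norm_num
      rw [hcst]
      push_cast
      field_simp
      ring
    calc C (2⁻¹:ℝ) * (((k + d + 1 : ℕ) : MvPolynomial (Fin d) ℝ) * q i
          + X i * (C α * D + C β * ((C ((d:ℕ):ℝ) + C (((k - 1 : ℕ)):ℝ)) * D)))
        = C ((2⁻¹:ℝ) * (((k + d + 1 : ℕ):ℝ) * α)) * v i
          + C ((2⁻¹:ℝ) * (((k + d + 1 : ℕ):ℝ) * β + (α + β * (((d:ℕ):ℝ) + ((k-1:ℕ):ℝ))))) * (X i * D) := by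
          simp only [hqdef, natCast_poly, map_mul, map_add]
          ring
      _ = v i := by rw [hc1, hc2]; simp
lemma inj_q {d k : ℕ} {q q' : Fin d → MvPolynomial (Fin d) ℝ}
    (hq : ∀ i, (q i).IsHomogeneous k) (hq' : ∀ i, (q' i).IsHomogeneous k)
    (h : matDiv d (symQX d q) = matDiv d (symQX d q')) : q = q' := by
  classical
  set r : Fin d → MvPolynomial (Fin d) ℝ := fun i => q i - q' i with hrdef
  have hr : ∀ i, (r i).IsHomogeneous k := fun i => (hq i).sub (hq' i)
  set s : MvPolynomial (Fin d) ℝ := ∑ j, pderiv j (r j) with hs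
  have hshom : s.IsHomogeneous (k - 1) :=
    IsHomogeneous.sum _ _ _ fun j _ => hom_pderiv (hr j) j
  set N : MvPolynomial (Fin d) ℝ := ((k + d + 1 : ℕ) : MvPolynomial (Fin d) ℝ) with hN
  have hNC : N = C ((k + d + 1 : ℕ) : ℝ) := natCast_poly _
  have hNne : N ≠ 0 := by
    rw [hNC, Ne, C_eq_zero]
    positivity
  have key : ∀ i, N * r i = -(X i * s) := by
    intro i
    have h1 := congrFun h i
    rw [matDiv_symQX q hq i, matDiv_symQX q' hq' i] at h1
    have h2 := mul_left_cancel₀ (show (C (2⁻¹ : ℝ) : MvPolynomial (Fin d) ℝ) ≠ 0 by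
      rw [Ne, C_eq_zero]; norm_num) h1
    have hsd : s = (∑ j, pderiv j (q j)) - (∑ j, pderiv j (q' j)) := by
      rw [hs, ← Finset.sum_sub_distrib]
      exact Finset.sum_congr rfl fun j _ => by rw [hrdef, map_sub]
    rw [hsd, hrdef]
    rw [← hN] at h2
    ring_nf
    ring_nf at h2
    linear_combination h2
  have hEs : ∑ i : Fin d, X i * pderiv i s = (((k - 1 : ℕ)) : MvPolynomial (Fin d) ℝ) * s :=
    euler hshom
  have hsum : N * s = -((((d : ℕ)) : MvPolynomial (Fin d) ℝ) * s
      + (((k - 1 : ℕ)) : MvPolynomial (Fin d) ℝ) * s) := by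
    calc N * s = ∑ i : Fin d, N * pderiv i (r i) := by rw [hs, Finset.mul_sum]
      _ = ∑ i : Fin d, pderiv i (N * r i) := by
          refine Finset.sum_congr rfl fun i _ => ?_
          rw [hNC, pderiv_C_mul]
      _ = ∑ i : Fin d, pderiv i (-(X i * s)) := Finset.sum_congr rfl fun i _ => by rw [key i]
      _ = -∑ i : Fin d, (pderiv i (X i) * s + X i * pderiv i s) := by
          rw [← Finset.sum_neg_distrib]
          exact Finset.sum_congr rfl fun i _ => by rw [map_neg, pderiv_mul]
      _ = -((((d : ℕ)) : MvPolynomial (Fin d) ℝ) * s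
          + (((k - 1 : ℕ)) : MvPolynomial (Fin d) ℝ) * s) := by
          rw [Finset.sum_add_distrib, hEs]
          congr 2
          simp only [pderiv_X_self, one_mul]
          rw [Finset.sum_const, Finset.card_univ, Fintype.card_fin, nsmul_eq_mul]
  have hs0 : s = 0 := by
    have hz : (((k + d + 1 + d + (k - 1) : ℕ)) : MvPolynomial (Fin d) ℝ) * s = 0 := by
      push_cast [← hN] at hsum ⊢
      linear_combination hsum
    rcases mul_eq_zero.mp hz with hzc | hzs
    · exfalso
      rw [natCast_poly, C_eq_zero] at hzc
      have : ((k + d + 1 + d + (k - 1) : ℕ) : ℝ) ≠ 0 := by positivity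
      exact this hzc
    · exact hzs
  have hr0 : ∀ i, r i = 0 := by
    intro i
    have := key i
    rw [hs0, mul_zero, neg_zero] at this
    rcases mul_eq_zero.mp this with hzc | hzs
    · exact absurd hzc hNne
    · exact hzs
  funext i
  have := hr0 i
  rw [hrdef] at this
  exact sub_eq_zero.mp this
theorem stmt_8 (d k : ℕ) (hd : 1 ≤ d) :
    Set.BijOn (matDiv d)
      {τ : Fin d → Fin d → MvPolynomial (Fin d) ℝ |
        ∃ q : Fin d → MvPolynomial (Fin d) ℝ, (∀ i, (q i).IsHomogeneous k) ∧ τ = symQX d q}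
      {v : Fin d → MvPolynomial (Fin d) ℝ | ∀ i, (v i).IsHomogeneous k} ∧
    (∀ v : Fin d → MvPolynomial (Fin d) ℝ, (∀ i, (v i).totalDegree ≤ k) →
      ∃ τ : Fin d → Fin d → MvPolynomial (Fin d) ℝ,
        (∀ i j, (τ i j).totalDegree ≤ k + 1) ∧ (∀ i j, τ i j = τ j i) ∧
        matDiv d τ = v) := by
  constructor
  · refine ⟨?_, ?_, ?_⟩
    · -- MapsTo
      rintro τ ⟨q, hq, rfl⟩
      intro i
      rw [matDiv_symQX q hq i]
      apply IsHomogeneous.C_mul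
      apply IsHomogeneous.add
      · rw [natCast_poly]
        exact (hq i).C_mul _
      · rw [Finset.mul_sum]
        exact IsHomogeneous.sum _ _ _ fun j _ => hom_X_mul_pderiv (hq j) i j
    · -- InjOn
      rintro τ ⟨q, hq, rfl⟩ τ' ⟨q', hq', rfl⟩ h
      rw [inj_q hq hq' h]
    · -- SurjOn
      intro v hv
      obtain ⟨q, hq, hEq⟩ := exists_q hd v hv
      exact ⟨symQX d q, ⟨q, hq, rfl⟩, hEq⟩
  · intro v hv
    have H : ∀ m : ℕ, ∃ q : Fin d → MvPolynomial (Fin d) ℝ,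
        (∀ i, (q i).IsHomogeneous m) ∧
        matDiv d (symQX d q) = fun i => homogeneousComponent m (v i) :=
      fun m => exists_q hd _ fun i => homogeneousComponent_isHomogeneous m (v i)
    choose Q hQ1 hQ2 using H
    refine ⟨fun i j => ∑ m ∈ Finset.range (k + 1), symQX d (Q m) i j, ?_, ?_, ?_⟩
    · intro i j
      refine le_trans (totalDegree_finset_sum _ _) ?_
      apply Finset.sup_le
      intro m hm
      have hhom : (symQX d (Q m) i j).IsHomogeneous (m + 1) := by
        apply IsHomogeneous.C_mul
        apply IsHomogeneous.add
        · exact (hQ1 m i).mul (isHomogeneous_X _ j)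
        · have := (isHomogeneous_X ℝ i).mul (hQ1 m j)
          rwa [add_comm] at this
      refine le_trans hhom.totalDegree_le ?_
      simp only [Finset.mem_range] at hm
      omega
    · intro i j
      refine Finset.sum_congr rfl fun m _ => ?_
      simp only [symQX]
      ring
    · funext i
      show ∑ j, pderiv j (∑ m ∈ Finset.range (k + 1), symQX d (Q m) i j) = v i
      calc ∑ j, pderiv j (∑ m ∈ Finset.range (k + 1), symQX d (Q m) i j)
          = ∑ m ∈ Finset.range (k + 1), ∑ j, pderiv j (symQX d (Q m) i j) := by
            simp only [map_sum]
            rw [Finset.sum_comm]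
        _ = ∑ m ∈ Finset.range (k + 1), homogeneousComponent m (v i) := by
            refine Finset.sum_congr rfl fun m _ => ?_
            exact congrFun (hQ2 m) i
        _ = v i := by
            conv_rhs => rw [← sum_homogeneousComponent (v i)]
            have hsub : Finset.range ((v i).totalDegree + 1) ⊆ Finset.range (k + 1) :=
              Finset.range_subset_range.mpr (by have := hv i; omega)
            have hzero : ∀ x ∈ Finset.range (k + 1),
                x ∉ Finset.range ((v i).totalDegree + 1) →
                homogeneousComponent x (v i) = 0 := by
              intro x _ hx
              simp only [Finset.mem_range, not_lt] at hx
              exact homogeneousComponent_eq_zero x (v i) (by omega)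
            exact (Finset.sum_subset hsub hzero).symm
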